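/- With nodes x_0,...,x_{N-1}, positive weights w_n, dual weights w̄_n defined by w_n w̄_n ∏_{m≠n}(x_n-x_m)^2 = 1, let γ_k be the leading coefficient of the orthonormal polynomial of degree k for weights {w_n}, and γ̄_j the leading coefficient of the orthonormal polynomial of degree j for the dual weights. Then γ̄_{N-k-1} · γ_k = 1 for 0 ≤ k ≤ N-1. -/

import Mathlib

open Polynomial Finset RealInnerProductSpace

namespace DualRecAux

lemma esum_apply {ι κ : Type*} [Fintype ι] (s : Finset κ) (v : κ → EuclideanSpace ℝ ι) (n : ι) :
    (∑ i ∈ s, v i) n = ∑ i ∈ s, v i n := by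
  change (EuclideanSpace.projₗ (𝕜 := ℝ) n) (∑ i ∈ s, v i) = _
  rw [map_sum]; rfl

lemma lagrange_coeff_sum {N : ℕ} (x : Fin N → ℝ) (hx : Function.Injective x)
    (f : ℝ[X]) (hf : f.degree < N) :
    ∑ n : Fin N, f.eval (x n) * (∏ m ∈ Finset.univ.erase n, (x n - x m))⁻¹
      = f.coeff (N - 1) := by
  have hinj : Set.InjOn x (Finset.univ : Finset (Fin N)) := hx.injOn
  have hcard : #(Finset.univ : Finset (Fin N)) = N := by simp
  have hf' : f.degree < #(Finset.univ : Finset (Fin N)) := by rw [hcard]; exact_mod_cast hf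
  conv_rhs => rw [Lagrange.eq_interpolate hinj hf']
  rw [Lagrange.interpolate_apply, Polynomial.finset_sum_coeff]
  refine Finset.sum_congr rfl fun n _ => ?_
  have hdb : (Lagrange.basis Finset.univ x n).natDegree = N - 1 := by
    rw [Lagrange.natDegree_basis hinj (mem_univ n), hcard]
  have hlc : (Lagrange.basis Finset.univ x n).leadingCoeff
      = (∏ m ∈ Finset.univ.erase n, (x n - x m))⁻¹ := by
    rw [Lagrange.basis, Polynomial.leadingCoeff_prod, ← Finset.prod_inv_distrib]
    refine Finset.prod_congr rfl fun m hm => ?_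
    have hne : x n ≠ x m := fun h => (mem_erase.mp hm).1 (hx h).symm
    rw [Lagrange.basisDivisor, Polynomial.leadingCoeff_mul, Polynomial.leadingCoeff_C,
      Polynomial.leadingCoeff_X_sub_C, mul_one]
  rw [Polynomial.coeff_C_mul, ← hdb, Polynomial.coeff_natDegree, hlc]

noncomputable def vecOf (N : ℕ) (c x : Fin N → ℝ) (t : ℝ[X]) : EuclideanSpace ℝ (Fin N) :=
  WithLp.toLp 2 (fun n => t.eval (x n) * c n)

lemma inner_vecOf {N : ℕ} (c c' x : Fin N → ℝ) (t s : ℝ[X]) :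
    ⟪vecOf N c x t, vecOf N c' x s⟫
      = ∑ n : Fin N, (t.eval (x n) * s.eval (x n)) * (c n * c' n) := by
  rw [PiLp.inner_apply]
  refine Finset.sum_congr rfl fun n _ => ?_
  simp only [RCLike.inner_apply, conj_trivial, vecOf, PiLp.toLp_apply]
  ring

lemma li_vecOf {N d : ℕ} (hd : d ≤ N) (x : Fin N → ℝ) (hx : Function.Injective x)
    (c : Fin N → ℝ) (hc : ∀ n, c n ≠ 0) :
    LinearIndependent ℝ (fun j : Fin d => vecOf N c x (X ^ (j : ℕ))) := by
  rw [Fintype.linearIndependent_iff]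
  intro g hg j
  set f : ℝ[X] := ∑ i : Fin d, Polynomial.C (g i) * X ^ (i : ℕ) with hf
  have hfz : f = 0 := by
    refine Polynomial.eq_zero_of_natDegree_lt_card_of_eval_eq_zero f hx ?_ ?_
    · intro n
      have h1 := congrArg (EuclideanSpace.projₗ (𝕜 := ℝ) n)
        (hg : ∑ i : Fin d, g i • vecOf N c x (X ^ (i : ℕ)) = 0)
      rw [map_sum, map_zero] at h1
      have h2 : ∑ i : Fin d, g i * (x n ^ (i : ℕ) * c n) = 0 := by
        rw [← h1]
        refine Finset.sum_congr rfl fun i _ => ?_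
        rw [map_smul, smul_eq_mul]
        congr 1
        show x n ^ (i : ℕ) * c n = (vecOf N c x (X ^ (i : ℕ))) n
        simp [vecOf]
      have h3 : (∑ i : Fin d, g i * x n ^ (i : ℕ)) * c n = 0 := by
        rw [Finset.sum_mul, ← h2]
        exact Finset.sum_congr rfl fun i _ => by ring
      have h4 : (∑ i : Fin d, g i * x n ^ (i : ℕ)) = 0 :=
        (mul_eq_zero.mp h3).resolve_right (hc n)
      rw [hf, Polynomial.eval_finset_sum]
      simpa using h4
    · have h5 : f.natDegree ≤ d - 1 := by
        refine Polynomial.natDegree_sum_le_of_forall_le _ _ fun i _ => ?_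
        refine le_trans (Polynomial.natDegree_C_mul_le _ _) ?_
        rw [Polynomial.natDegree_X_pow]
        omega
      have : 0 < d := j.pos
      simp only [Fintype.card_fin]
      omega
  have h6 : f.coeff (j : ℕ) = g j := by
    rw [hf, Polynomial.finset_sum_coeff]
    simp only [Polynomial.coeff_C_mul, Polynomial.coeff_X_pow, Fin.val_eq_val]
    simp
  rw [hfz] at h6
  simpa using h6.symm

lemma mem_span_vecOf {N d : ℕ} (c x : Fin N → ℝ) (t : ℝ[X]) (ht : t.natDegree < d) :
    vecOf N c x t ∈ Submodule.span ℝ (Set.range fun j : Fin d => vecOf N c x (X ^ (j : ℕ))) := by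
  have hrepr : vecOf N c x t = ∑ j : Fin d, t.coeff (j : ℕ) • vecOf N c x (X ^ (j : ℕ)) := by
    apply PiLp.ext
    intro n
    rw [esum_apply]
    simp only [PiLp.smul_apply, smul_eq_mul, vecOf, PiLp.toLp_apply, eval_pow, eval_X]
    rw [Polynomial.eval_eq_sum_range' ht, Finset.sum_mul, ← Fin.sum_univ_eq_sum_range]
    exact Finset.sum_congr rfl fun j _ => by ring
  rw [hrepr]
  exact Submodule.sum_mem _ fun j _ =>
    Submodule.smul_mem _ _ (Submodule.subset_span ⟨j, rfl⟩)

lemma mem_orth_span {E : Type*} [NormedAddCommGroup E] [InnerProductSpace ℝ E]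
    {ι : Type*} (f : ι → E) (v : E) (h : ∀ i, ⟪f i, v⟫ = 0) :
    v ∈ (Submodule.span ℝ (Set.range f))ᗮ := by
  rw [Submodule.mem_orthogonal]
  intro u hu
  induction hu using Submodule.span_induction with
  | mem u hu => obtain ⟨i, rfl⟩ := hu; exact h i
  | zero => simp
  | add u v _ _ h1 h2 => rw [inner_add_left, h1, h2, add_zero]
  | smul a u _ h1 => rw [real_inner_smul_left, h1, mul_zero]

end DualRecAux

open DualRecAux

/-- Reciprocity of leading coefficients of dual families of discrete
orthogonal polynomials: `γ̄_{N-k-1} · γ_k = 1`. -/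
theorem dual_leading_coefficients_reciprocity
    (N k : ℕ) (hN : 0 < N) (hk : k ≤ N - 1)
    (x : Fin N → ℝ) (hx : StrictMono x)
    (w wbar : Fin N → ℝ) (hw : ∀ n, 0 < w n)
    (hdual : ∀ n, w n * wbar n * ∏ m ∈ Finset.univ.erase n, (x n - x m) ^ 2 = 1)
    (p : Polynomial ℝ) (hpd : p.natDegree = k)
    (γ : ℝ) (hplc : p.leadingCoeff = γ) (hγ : 0 < γ)
    (hpn : ∑ n : Fin N, (p.eval (x n)) ^ 2 * w n = 1)
    (hpo : ∀ m : ℕ, m < k → ∑ n : Fin N, p.eval (x n) * (x n) ^ m * w n = 0)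
    (q : Polynomial ℝ) (hqd : q.natDegree = N - k - 1)
    (γbar : ℝ) (hqlc : q.leadingCoeff = γbar) (hγbar : 0 < γbar)
    (hqn : ∑ n : Fin N, (q.eval (x n)) ^ 2 * wbar n = 1)
    (hqo : ∀ m : ℕ, m < N - k - 1 → ∑ n : Fin N, q.eval (x n) * (x n) ^ m * wbar n = 0) :
    γbar * γ = 1 := by
  classical
  have hxinj : Function.Injective x := hx.injective
  have hkN : k < N := by omega
  set r : Fin N → ℝ := fun n => ∏ m ∈ Finset.univ.erase n, (x n - x m) with hrdef
  have hrne : ∀ n, r n ≠ 0 := by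
    intro n
    refine Finset.prod_ne_zero_iff.mpr fun m hm => sub_ne_zero.mpr fun h => ?_
    exact (Finset.mem_erase.mp hm).1 (hxinj h).symm
  have hww : ∀ n, w n * wbar n * r n ^ 2 = 1 := by
    intro n; have h := hdual n; rwa [Finset.prod_pow] at h
  have hwbar : ∀ n, 0 < wbar n := by
    intro n
    have h1 : 0 < w n * r n ^ 2 :=
      mul_pos (hw n) (pow_two_pos_of_ne_zero (hrne n))
    nlinarith [hww n]
  set sqw : Fin N → ℝ := fun n => Real.sqrt (w n) with hsqwdef
  set sqb : Fin N → ℝ := fun n => Real.sqrt (wbar n) with hsqbdef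
  have hsqw2 : ∀ n, sqw n ^ 2 = w n := fun n => Real.sq_sqrt (hw n).le
  have hsqb2 : ∀ n, sqb n ^ 2 = wbar n := fun n => Real.sq_sqrt (hwbar n).le
  have hsqwne : ∀ n, sqw n ≠ 0 := fun n => ne_of_gt (Real.sqrt_pos.mpr (hw n))
  have hsqbne : ∀ n, sqb n ≠ 0 := fun n => ne_of_gt (Real.sqrt_pos.mpr (hwbar n))
  set ε : Fin N → ℝ := fun n => sqw n * sqb n * r n with hεdef
  have hε2 : ∀ n, ε n ^ 2 = 1 := by
    intro n
    have h : ε n ^ 2 = (sqw n ^ 2) * (sqb n ^ 2) * r n ^ 2 := by rw [hεdef]; ring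
    rw [h, hsqw2, hsqb2]; exact hww n
  set cw : Fin N → ℝ := fun n => sqw n * ε n with hcwdef
  have hcwne : ∀ n, cw n ≠ 0 := by
    intro n h
    have h2 := hε2 n
    rw [hcwdef] at h
    rcases mul_eq_zero.mp h with h | h
    · exact hsqwne n h
    · rw [h] at h2; norm_num at h2
  have hcw2 : ∀ n, cw n * cw n = w n := by
    intro n
    have : cw n * cw n = sqw n ^ 2 * ε n ^ 2 := by rw [hcwdef]; ring
    rw [this, hsqw2, hε2, mul_one]
  have hkey : ∀ n, sqb n * cw n = (r n)⁻¹ := by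
    intro n
    have h1 : sqb n * cw n = (sqw n ^ 2) * (sqb n ^ 2) * r n := by
      rw [hcwdef, hεdef]; ring
    rw [h1, hsqw2, hsqb2]
    refine eq_inv_of_mul_eq_one_left ?_
    calc w n * wbar n * r n * r n = w n * wbar n * r n ^ 2 := by ring
      _ = 1 := hww n
  -- the pairing identity
  have pairI : ∀ t s : ℝ[X], t.natDegree + s.natDegree < N →
      ⟪vecOf N sqb x t, vecOf N cw x s⟫ = (t * s).coeff (N - 1) := by
    intro t s hts
    have hdeg : (t * s).degree < (N : WithBot ℕ) := by
      refine lt_of_le_of_lt Polynomial.degree_le_natDegree ?_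
      exact_mod_cast lt_of_le_of_lt (Polynomial.natDegree_mul_le) hts
    rw [inner_vecOf, ← lagrange_coeff_sum x hxinj (t * s) hdeg]
    refine Finset.sum_congr rfl fun n _ => ?_
    rw [Polynomial.eval_mul, ← hkey n]
  have hp0 : p ≠ 0 := fun h => by
    rw [h, Polynomial.leadingCoeff_zero] at hplc; exact absurd hplc.symm (ne_of_gt hγ)
  have hq0 : q ≠ 0 := fun h => by
    rw [h, Polynomial.leadingCoeff_zero] at hqlc; exact absurd hqlc.symm (ne_of_gt hγbar)
  -- inner product facts
  have hPD : ∀ (j m : ℕ), j + m < N - 1 →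
      ⟪vecOf N sqb x (X ^ j), vecOf N cw x (X ^ m)⟫ = 0 := by
    intro j m hjm
    rw [pairI (X ^ j) (X ^ m) (by rw [Polynomial.natDegree_X_pow, Polynomial.natDegree_X_pow]; omega),
      ← pow_add, Polynomial.coeff_X_pow, if_neg (by omega)]
  have hPp : ∀ j : ℕ, j < N - k - 1 → ⟪vecOf N sqb x (X ^ j), vecOf N cw x p⟫ = 0 := by
    intro j hj
    rw [pairI (X ^ j) p (by rw [Polynomial.natDegree_X_pow, hpd]; omega)]
    refine Polynomial.coeff_eq_zero_of_natDegree_lt ?_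
    rw [Polynomial.natDegree_mul (pow_ne_zero _ Polynomial.X_ne_zero) hp0,
      Polynomial.natDegree_X_pow, hpd]
    omega
  have hqp : ⟪vecOf N sqb x q, vecOf N cw x p⟫ = γbar * γ := by
    rw [pairI q p (by rw [hqd, hpd]; omega)]
    have hnd : (q * p).natDegree = N - 1 := by
      rw [Polynomial.natDegree_mul hq0 hp0, hqd, hpd]; omega
    rw [← hnd, Polynomial.coeff_natDegree, Polynomial.leadingCoeff_mul, hqlc, hplc]
  have hDp : ∀ m : Fin k, ⟪vecOf N cw x (X ^ (m : ℕ)), vecOf N cw x p⟫ = 0 := by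
    intro m
    rw [inner_vecOf, ← hpo m m.2]
    refine Finset.sum_congr rfl fun n _ => ?_
    rw [hcw2 n]
    simp only [eval_pow, eval_X]
    ring
  have hPq : ∀ j : Fin (N - k - 1), ⟪vecOf N sqb x (X ^ (j : ℕ)), vecOf N sqb x q⟫ = 0 := by
    intro j
    rw [inner_vecOf, ← hqo j j.2]
    refine Finset.sum_congr rfl fun n _ => ?_
    have : sqb n * sqb n = wbar n := by rw [← hsqb2 n]; ring
    rw [this]
    simp only [eval_pow, eval_X]
    ring
  have hpp : ⟪vecOf N cw x p, vecOf N cw x p⟫ = 1 := by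
    rw [inner_vecOf, ← hpn]
    exact Finset.sum_congr rfl fun n _ => by rw [hcw2 n]; ring
  have hqq : ⟪vecOf N sqb x q, vecOf N sqb x q⟫ = 1 := by
    rw [inner_vecOf, ← hqn]
    refine Finset.sum_congr rfl fun n _ => ?_
    have : sqb n * sqb n = wbar n := by rw [← hsqb2 n]; ring
    rw [this]; ring
  -- subspaces
  set P := Submodule.span ℝ (Set.range fun j : Fin (N - k) => vecOf N sqb x (X ^ (j : ℕ))) with hPdef
  set Q := Submodule.span ℝ (Set.range fun j : Fin (N - k - 1) => vecOf N sqb x (X ^ (j : ℕ))) with hQdef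
  set D := Submodule.span ℝ (Set.range fun m : Fin k => vecOf N cw x (X ^ (m : ℕ))) with hDdef
  have hfinE : Module.finrank ℝ (EuclideanSpace ℝ (Fin N)) = N := by
    simp [finrank_euclideanSpace_fin]
  have hfinP : Module.finrank ℝ P = N - k := by
    rw [hPdef, finrank_span_eq_card (li_vecOf (by omega) x hxinj sqb hsqbne)]
    simp
  have hfinQ : Module.finrank ℝ Q = N - k - 1 := by
    rw [hQdef, finrank_span_eq_card (li_vecOf (by omega) x hxinj sqb hsqbne)]
    simp
  have hfinD : Module.finrank ℝ D = k := by
    rw [hDdef, finrank_span_eq_card (li_vecOf (by omega) x hxinj cw hcwne)]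
    simp
  have hDle : D ≤ Pᗮ := by
    rw [hDdef, Submodule.span_le]
    rintro _ ⟨m, rfl⟩
    rw [SetLike.mem_coe, hPdef]
    refine mem_orth_span _ _ fun j => ?_
    exact hPD (j : ℕ) (m : ℕ) (by have := j.2; have := m.2; omega)
  have hfinPo : Module.finrank ℝ Pᗮ = k := by
    have h := Submodule.finrank_add_finrank_orthogonal P
    rw [hfinP, hfinE] at h
    omega
  have hDeq : D = Pᗮ := Submodule.eq_of_le_of_finrank_eq hDle (by rw [hfinD, hfinPo])
  have hvpP : vecOf N cw x p ∈ P := by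
    have h1 : vecOf N cw x p ∈ Dᗮ := by
      rw [hDdef]
      exact mem_orth_span _ _ hDp
    rw [hDeq, Submodule.orthogonal_orthogonal] at h1
    exact h1
  have hvqP : vecOf N sqb x q ∈ P := mem_span_vecOf sqb x q (by rw [hqd]; omega)
  have hvpQo : vecOf N cw x p ∈ Qᗮ := by
    rw [hQdef]
    exact mem_orth_span _ _ fun j => hPp (j : ℕ) j.2
  have hvqQo : vecOf N sqb x q ∈ Qᗮ := by
    rw [hQdef]
    exact mem_orth_span _ _ hPq
  set W := P ⊓ Qᗮ with hWdef
  have hvpW : vecOf N cw x p ∈ W := Submodule.mem_inf.mpr ⟨hvpP, hvpQo⟩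
  have hvqW : vecOf N sqb x q ∈ W := Submodule.mem_inf.mpr ⟨hvqP, hvqQo⟩
  have hQleP : Q ≤ P := by
    rw [hQdef, Submodule.span_le]
    rintro _ ⟨j, rfl⟩
    exact Submodule.subset_span ⟨⟨(j : ℕ), by omega⟩, rfl⟩
  have hWle1 : Module.finrank ℝ W ≤ 1 := by
    have h1 := Submodule.finrank_sup_add_finrank_inf_eq Q W
    have h2 : Q ⊓ W = ⊥ := by
      rw [eq_bot_iff]
      refine le_trans (le_trans (inf_le_inf_left Q inf_le_right) ?_) (le_refl ⊥)
      exact (Submodule.orthogonal_disjoint Q).le_bot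
    have h3 : Q ⊔ W ≤ P := sup_le hQleP inf_le_left
    have h4 : Module.finrank ℝ ↥(Q ⊔ W) ≤ N - k := hfinP ▸ Submodule.finrank_mono h3
    rw [h2, finrank_bot, hfinQ] at h1
    omega
  have hvpne : vecOf N cw x p ≠ 0 := by
    intro h
    rw [h, inner_zero_left] at hpp
    norm_num at hpp
  have hsp : Module.finrank ℝ (Submodule.span ℝ {vecOf N cw x p}) = 1 :=
    finrank_span_singleton hvpne
  have hsple : Submodule.span ℝ {vecOf N cw x p} ≤ W :=
    (Submodule.span_singleton_le_iff_mem _ _).mpr hvpW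
  have hWeq : Submodule.span ℝ {vecOf N cw x p} = W := by
    refine Submodule.eq_of_le_of_finrank_eq hsple ?_
    rw [hsp]
    have := Submodule.finrank_mono hsple
    omega
  obtain ⟨c, hc⟩ := Submodule.mem_span_singleton.mp (hWeq ▸ hvqW)
  have h6 : c ^ 2 = 1 := by
    have h := hqq
    rw [← hc, real_inner_smul_left, real_inner_smul_right, hpp] at h
    nlinarith [h]
  have h7 : γbar * γ = c := by
    rw [← hqp, ← hc, real_inner_smul_left, hpp, mul_one]
  have h8 : (c - 1) * (c + 1) = 0 := by linear_combination h6
  rcases mul_eq_zero.mp h8 with h | h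
  · rw [h7]; linarith
  · exfalso
    have := mul_pos hγbar hγ
    rw [h7] at this
    linarith
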